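/- Let f : Ω × ℝ × ℝⁿ → ℝ be such that ξ ↦ f(x,u,ξ) is C², and suppose that for all (x,u,ξ,λ) the second-derivative bounds ν(s+|ξ|)^{p−2}|λ|² ≤ ⟨∂²f(x,u,ξ)λ, λ⟩ ≤ L(s+|ξ|)^{p−2}|λ|² hold, where p > 1, s ∈ [0,1], 0 < ν ≤ 1 ≤ L. Then there is a constant c = c(n,p,ν,L) such that for all (x,u) ∈ Ω × ℝ and all ξ₁, ξ₂ ∈ ℝⁿ: (1/c)|V_s(ξ₁) − V_s(ξ₂)|² ≤ f(x,u,ξ₁) − f(x,u,ξ₂) − ⟨∂f(x,u,ξ₂), ξ₁ − ξ₂⟩. -/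

import Mathlib

open Real Set

section Helpers

lemma rpow_upper_of_mem {α M x : ℝ} (hM : 0 < M) (h1 : M/4 ≤ x) (h2 : x ≤ M) :
    x ^ α ≤ 4 ^ |α| * M ^ α := by
  have h4 : (1:ℝ) ≤ 4 ^ |α| := Real.one_le_rpow (by norm_num) (abs_nonneg α)
  rcases le_or_gt 0 α with hα | hα
  · calc x ^ α ≤ M ^ α := Real.rpow_le_rpow (lt_of_lt_of_le (by positivity) h1).le h2 hα
    _ ≤ 4 ^ |α| * M ^ α := le_mul_of_one_le_left (Real.rpow_nonneg hM.le _) h4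
  · calc x ^ α ≤ (M/4) ^ α := Real.rpow_le_rpow_of_nonpos (by positivity) h1 hα.le
    _ = 4 ^ (-α) * M ^ α := by
        rw [Real.div_rpow hM.le (by norm_num), Real.rpow_neg (by norm_num)]
        ring
    _ = 4 ^ |α| * M ^ α := by rw [abs_of_neg hα]

lemma rpow_lower_of_mem {β M x : ℝ} (hM : 0 < M) (h1 : M/4 ≤ x) (h2 : x ≤ 2*M) :
    min ((4:ℝ) ^ (-β)) (2 ^ β) * M ^ β ≤ x ^ β := by
  rcases le_or_gt 0 β with hβ | hβ
  · calc min ((4:ℝ) ^ (-β)) (2 ^ β) * M ^ β ≤ 4 ^ (-β) * M ^ β :=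
        mul_le_mul_of_nonneg_right (min_le_left _ _) (Real.rpow_nonneg hM.le _)
    _ = (M/4) ^ β := by
        rw [Real.div_rpow hM.le (by norm_num), Real.rpow_neg (by norm_num)]
        ring
    _ ≤ x ^ β := Real.rpow_le_rpow (by positivity) h1 hβ
  · calc min ((4:ℝ) ^ (-β)) (2 ^ β) * M ^ β ≤ 2 ^ β * M ^ β :=
        mul_le_mul_of_nonneg_right (min_le_right _ _) (Real.rpow_nonneg hM.le _)
    _ = (2*M) ^ β := (Real.mul_rpow (by norm_num) hM.le).symm
    _ ≤ x ^ β := Real.rpow_le_rpow_of_nonpos (lt_of_lt_of_le (by positivity) h1) h2 hβ.le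

lemma abs_rpow_sub_rpow_le {α r R x y : ℝ} (hr : 0 < r) (hx : x ∈ Set.Icc r R) (hy : y ∈ Set.Icc r R) :
    |x ^ α - y ^ α| ≤ |α| * max (r ^ (α - 1)) (R ^ (α - 1)) * |x - y| := by
  wlog h : y ≤ x generalizing x y
  · rw [abs_sub_comm, abs_sub_comm x]
    exact this hy hx (le_of_not_ge h)
  rcases eq_or_lt_of_le h with rfl | hlt
  · simp
  have hypos : 0 < y := lt_of_lt_of_le hr hy.1
  obtain ⟨c, hc, hc'⟩ := exists_hasDerivAt_eq_slope (fun t => t ^ α) (fun t => α * t ^ (α - 1)) hlt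
    (fun t ht => (Real.continuousAt_rpow_const t α
      (Or.inl (ne_of_gt (lt_of_lt_of_le hypos ht.1)))).continuousWithinAt)
    (fun t ht => Real.hasDerivAt_rpow_const (Or.inl (ne_of_gt (lt_of_lt_of_le hypos ht.1.le))))
  have hcpos : 0 < c := lt_of_lt_of_le hypos hc.1.le
  rw [eq_div_iff (sub_ne_zero.mpr (ne_of_gt hlt))] at hc'
  have hcb : c ^ (α - 1) ≤ max (r ^ (α - 1)) (R ^ (α - 1)) := by
    rcases le_or_gt 0 (α - 1) with h1 | h1
    · exact le_max_of_le_right (Real.rpow_le_rpow hcpos.le (hc.2.le.trans hx.2) h1)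
    · exact le_max_of_le_left (Real.rpow_le_rpow_of_nonpos hr (hy.1.trans hc.1.le) h1.le)
  calc |x ^ α - y ^ α| = |α| * c ^ (α - 1) * |x - y| := by
        rw [← hc', abs_mul, abs_mul, abs_of_nonneg (Real.rpow_nonneg hcpos.le _)]
  _ ≤ |α| * max (r ^ (α - 1)) (R ^ (α - 1)) * |x - y| := by
      apply mul_le_mul_of_nonneg_right _ (abs_nonneg _)
      exact mul_le_mul_of_nonneg_left hcb (abs_nonneg _)
lemma V_diff_le_aux {E : Type*} [NormedAddCommGroup E] [NormedSpace ℝ E] {s α : ℝ}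
    (hs : 0 ≤ s) (hα1 : 0 ≤ α + 1) (ξ₁ ξ₂ : E) (hM : 0 < s + ‖ξ₁‖ + ‖ξ₂‖)
    (hw : ‖ξ₂‖ ≤ ‖ξ₁‖) :
    ‖(s + ‖ξ₁‖) ^ α • ξ₁ - (s + ‖ξ₂‖) ^ α • ξ₂‖ ≤
      (8 + 4 ^ |α| * (1 + 4 * |α|)) * (s + ‖ξ₁‖ + ‖ξ₂‖) ^ α * ‖ξ₁ - ξ₂‖ := by
  set M := s + ‖ξ₁‖ + ‖ξ₂‖ with hMdef
  set C : ℝ := 8 + 4 ^ |α| * (1 + 4 * |α|) with hCdef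
  have h4 : (1:ℝ) ≤ 4 ^ |α| := Real.one_le_rpow (by norm_num) (abs_nonneg α)
  have hMα : 0 ≤ M ^ α := Real.rpow_nonneg hM.le _
  have hn1 : (0:ℝ) ≤ ‖ξ₁‖ := norm_nonneg _
  have hn2 : (0:ℝ) ≤ ‖ξ₂‖ := norm_nonneg _
  have hd : |(‖ξ₁‖ : ℝ) - ‖ξ₂‖| ≤ ‖ξ₁ - ξ₂‖ := abs_norm_sub_norm_le ξ₁ ξ₂
  have hdn : (0:ℝ) ≤ ‖ξ₁ - ξ₂‖ := norm_nonneg _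
  rcases le_or_gt M (4 * ‖ξ₁ - ξ₂‖) with hcase | hcase
  · -- case (i): M ≤ 4‖d‖; crude bound by sum of norms
    have key : ∀ ξ : E, ‖ξ‖ ≤ ‖ξ₁‖ → ‖(s + ‖ξ‖) ^ α • ξ‖ ≤ M ^ (α + 1) := by
      intro ξ hξ
      rcases eq_or_ne ξ 0 with rfl | hne
      · simpa using Real.rpow_nonneg hM.le (α + 1)
      have hpos : 0 < s + ‖ξ‖ := by have := norm_pos_iff.mpr hne; linarith
      calc ‖(s + ‖ξ‖) ^ α • ξ‖ = (s + ‖ξ‖) ^ α * ‖ξ‖ := by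
            rw [norm_smul, Real.norm_eq_abs, abs_of_nonneg (Real.rpow_nonneg hpos.le _)]
        _ ≤ (s + ‖ξ‖) ^ α * (s + ‖ξ‖) := by
            apply mul_le_mul_of_nonneg_left (by linarith) (Real.rpow_nonneg hpos.le _)
        _ = (s + ‖ξ‖) ^ (α + 1) := by rw [Real.rpow_add_one (ne_of_gt hpos)]
        _ ≤ M ^ (α + 1) := Real.rpow_le_rpow hpos.le (by rw [hMdef]; linarith) hα1
    calc ‖(s + ‖ξ₁‖) ^ α • ξ₁ - (s + ‖ξ₂‖) ^ α • ξ₂‖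
        ≤ ‖(s + ‖ξ₁‖) ^ α • ξ₁‖ + ‖(s + ‖ξ₂‖) ^ α • ξ₂‖ := norm_sub_le _ _
      _ ≤ M ^ (α + 1) + M ^ (α + 1) := add_le_add (key ξ₁ le_rfl) (key ξ₂ hw)
      _ = 2 * (M ^ α * M) := by rw [Real.rpow_add_one (ne_of_gt hM)]; ring
      _ ≤ 2 * (M ^ α * (4 * ‖ξ₁ - ξ₂‖)) := by
          apply mul_le_mul_of_nonneg_left (mul_le_mul_of_nonneg_left hcase hMα) (by norm_num)
      _ = 8 * M ^ α * ‖ξ₁ - ξ₂‖ := by ring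
      _ ≤ C * M ^ α * ‖ξ₁ - ξ₂‖ := by
          apply mul_le_mul_of_nonneg_right (mul_le_mul_of_nonneg_right _ hMα) hdn
          rw [hCdef]; nlinarith [abs_nonneg α]
  · -- case (ii): 4‖d‖ < M, both s+‖ξᵢ‖ ∈ [M/4, M]
    have h1u : s + ‖ξ₁‖ ≤ M := by rw [hMdef]; linarith
    have h1l : M/2 ≤ s + ‖ξ₁‖ := by rw [hMdef]; linarith
    have h2u : s + ‖ξ₂‖ ≤ M := by rw [hMdef]; linarith
    have h2l : M/4 ≤ s + ‖ξ₂‖ := by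
      have : (‖ξ₁‖:ℝ) - ‖ξ₂‖ ≤ ‖ξ₁ - ξ₂‖ := (le_abs_self _).trans hd
      rw [hMdef]; rw [hMdef] at hcase h1l; linarith
    have hsplit : (s + ‖ξ₁‖) ^ α • ξ₁ - (s + ‖ξ₂‖) ^ α • ξ₂
        = (s + ‖ξ₁‖) ^ α • (ξ₁ - ξ₂) + ((s + ‖ξ₁‖) ^ α - (s + ‖ξ₂‖) ^ α) • ξ₂ := by
      rw [smul_sub, sub_smul]; abel
    have hterm1 : ‖(s + ‖ξ₁‖) ^ α • (ξ₁ - ξ₂)‖ ≤ 4 ^ |α| * M ^ α * ‖ξ₁ - ξ₂‖ := by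
      rw [norm_smul, Real.norm_eq_abs,
        abs_of_nonneg (Real.rpow_nonneg (by linarith : (0:ℝ) ≤ s + ‖ξ₁‖) _)]
      exact mul_le_mul_of_nonneg_right (rpow_upper_of_mem hM (by linarith) h1u) hdn
    have hterm2 : ‖((s + ‖ξ₁‖) ^ α - (s + ‖ξ₂‖) ^ α) • ξ₂‖ ≤
        4 ^ |α| * (4 * |α|) * M ^ α * ‖ξ₁ - ξ₂‖ := by
      rw [norm_smul, Real.norm_eq_abs]
      have hMa1 : (0:ℝ) ≤ M ^ (α - 1) := Real.rpow_nonneg hM.le _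
      have habs : |(s + ‖ξ₁‖) ^ α - (s + ‖ξ₂‖) ^ α| ≤
          |α| * max ((M/4) ^ (α - 1)) (M ^ (α - 1)) * ‖ξ₁ - ξ₂‖ := by
        have h0 := abs_rpow_sub_rpow_le (α := α) (by positivity : (0:ℝ) < M/4)
          (⟨by linarith, h1u⟩ : s + ‖ξ₁‖ ∈ Set.Icc (M/4) M) ⟨h2l, h2u⟩
        apply h0.trans
        apply mul_le_mul_of_nonneg_left _ (by positivity)
        have : (s + ‖ξ₁‖) - (s + ‖ξ₂‖) = (‖ξ₁‖:ℝ) - ‖ξ₂‖ := by ring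
        rw [this]
        exact hd
      have e1 : (M/4) ^ (α - 1) = 4 ^ (-(α-1)) * M ^ (α - 1) := by
        rw [Real.div_rpow hM.le (by norm_num), Real.rpow_neg (by norm_num : (0:ℝ) ≤ 4)]
        ring
      have e2 : (4:ℝ) ^ (-(α-1)) ≤ 4 ^ (|α| + 1) := by
        apply (Real.rpow_le_rpow_left_iff (by norm_num : (1:ℝ) < 4)).mpr
        rcases abs_cases α with ⟨h1, h2⟩ | ⟨h1, h2⟩ <;> linarith
      have hmax : max ((M/4) ^ (α - 1)) (M ^ (α - 1)) ≤ 4 ^ (|α| + 1) * M ^ (α - 1) := by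
        apply max_le
        · rw [e1]
          exact mul_le_mul_of_nonneg_right e2 hMa1
        · nth_rewrite 1 [← one_mul (M ^ (α - 1))]
          exact mul_le_mul_of_nonneg_right (Real.one_le_rpow (by norm_num) (by positivity)) hMa1
      have hstep : |(s + ‖ξ₁‖) ^ α - (s + ‖ξ₂‖) ^ α| ≤
          |α| * (4 ^ (|α| + 1) * M ^ (α - 1)) * ‖ξ₁ - ξ₂‖ := by
        apply habs.trans
        apply mul_le_mul_of_nonneg_right _ hdn
        exact mul_le_mul_of_nonneg_left hmax (abs_nonneg _)
      calc |(s + ‖ξ₁‖) ^ α - (s + ‖ξ₂‖) ^ α| * ‖ξ₂‖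
          ≤ (|α| * (4 ^ (|α| + 1) * M ^ (α - 1)) * ‖ξ₁ - ξ₂‖) * M :=
            mul_le_mul hstep (by rw [hMdef]; linarith) hn2 (by positivity)
        _ = 4 ^ (|α| + 1) * |α| * (M ^ (α - 1) * M) * ‖ξ₁ - ξ₂‖ := by ring
        _ = 4 ^ (|α| + 1) * |α| * M ^ α * ‖ξ₁ - ξ₂‖ := by
            rw [← Real.rpow_add_one (ne_of_gt hM) (α - 1)]
            ring_nf
        _ = 4 ^ |α| * (4 * |α|) * M ^ α * ‖ξ₁ - ξ₂‖ := by
            rw [Real.rpow_add (by norm_num : (0:ℝ) < 4), Real.rpow_one]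
            ring
    calc ‖(s + ‖ξ₁‖) ^ α • ξ₁ - (s + ‖ξ₂‖) ^ α • ξ₂‖
        ≤ ‖(s + ‖ξ₁‖) ^ α • (ξ₁ - ξ₂)‖ + ‖((s + ‖ξ₁‖) ^ α - (s + ‖ξ₂‖) ^ α) • ξ₂‖ := by
          rw [hsplit]; exact norm_add_le _ _
      _ ≤ 4 ^ |α| * M ^ α * ‖ξ₁ - ξ₂‖ + 4 ^ |α| * (4 * |α|) * M ^ α * ‖ξ₁ - ξ₂‖ :=
          add_le_add hterm1 hterm2
      _ = (4 ^ |α| * (1 + 4 * |α|)) * M ^ α * ‖ξ₁ - ξ₂‖ := by ring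
      _ ≤ C * M ^ α * ‖ξ₁ - ξ₂‖ := by
          apply mul_le_mul_of_nonneg_right (mul_le_mul_of_nonneg_right _ hMα) hdn
          rw [hCdef]; linarith

lemma V_diff_le {E : Type*} [NormedAddCommGroup E] [NormedSpace ℝ E] {s α : ℝ}
    (hs : 0 ≤ s) (hα1 : 0 ≤ α + 1) (ξ₁ ξ₂ : E) (hM : 0 < s + ‖ξ₁‖ + ‖ξ₂‖) :
    ‖(s + ‖ξ₁‖) ^ α • ξ₁ - (s + ‖ξ₂‖) ^ α • ξ₂‖ ≤
      (8 + 4 ^ |α| * (1 + 4 * |α|)) * (s + ‖ξ₁‖ + ‖ξ₂‖) ^ α * ‖ξ₁ - ξ₂‖ := by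
  rcases le_total ‖ξ₂‖ ‖ξ₁‖ with hw | hw
  · exact V_diff_le_aux hs hα1 ξ₁ ξ₂ hM hw
  · have := V_diff_le_aux hs hα1 ξ₂ ξ₁ (by linarith) hw
    rw [norm_sub_rev, norm_sub_rev ξ₂ ξ₁] at this
    apply this.trans
    apply le_of_eq
    congr 2
    ring

lemma taylor_lower_bound {g g₁ g₂ : ℝ → ℝ}
    (hg : ∀ t, HasDerivAt g (g₁ t) t) (hg₁ : ∀ t, HasDerivAt g₁ (g₂ t) t)
    (h0 : ∀ t, 0 ≤ g₂ t) {a b : ℝ} (ha : 0 ≤ a) (hab : a < b) (hb : b < 1) :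
    ∃ τ ∈ Set.Ioo a b, (1 - b) * (b - a) * g₂ τ ≤ g 1 - g 0 - g₁ 0 := by
  have hmono : Monotone g₁ := by
    apply monotone_of_deriv_nonneg (fun t => (hg₁ t).differentiableAt)
    intro t
    rw [(hg₁ t).deriv]
    exact h0 t
  have hgc : ∀ s : Set ℝ, ContinuousOn g s := fun s t _ => (hg t).continuousAt.continuousWithinAt
  have hg₁c : ∀ s : Set ℝ, ContinuousOn g₁ s := fun s t _ => (hg₁ t).continuousAt.continuousWithinAt
  obtain ⟨σ, hσ, hσ'⟩ := exists_hasDerivAt_eq_slope g g₁ hb (hgc _) (fun t _ => hg t)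
  obtain ⟨σ', hσ'mem, hσ''⟩ := exists_hasDerivAt_eq_slope g g₁
    (show (0:ℝ) < b by linarith) (hgc _) (fun t _ => hg t)
  obtain ⟨τ, hτ, hτ'⟩ := exists_hasDerivAt_eq_slope g₁ g₂ hab (hg₁c _) (fun t _ => hg₁ t)
  refine ⟨τ, hτ, ?_⟩
  rw [eq_div_iff (by linarith : (1:ℝ) - b ≠ 0)] at hσ'
  rw [eq_div_iff (by linarith : b - (0:ℝ) ≠ 0)] at hσ''
  rw [eq_div_iff (by linarith : b - a ≠ 0)] at hτ'
  -- monotonicity facts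
  have m1 : g₁ b ≤ g₁ σ := hmono hσ.1.le
  have m2 : g₁ 0 ≤ g₁ σ' := hmono hσ'mem.1.le
  have m3 : g₁ 0 ≤ g₁ a := hmono ha
  have k1 : (1 - b) * g₁ b ≤ (1 - b) * g₁ σ := mul_le_mul_of_nonneg_left m1 (by linarith)
  have k2 : (b - 0) * g₁ 0 ≤ (b - 0) * g₁ σ' := mul_le_mul_of_nonneg_left m2 (by linarith)
  have k3 : (1 - b) * (g₁ b - g₁ a) ≤ (1 - b) * (g₁ b - g₁ 0) := by
    apply mul_le_mul_of_nonneg_left (by linarith) (by linarith)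
  nlinarith [hσ', hσ'', hτ']

lemma line_hasDerivAt {E : Type*} [NormedAddCommGroup E] [NormedSpace ℝ E] (ξ₂ d : E) (t : ℝ) :
    HasDerivAt (fun t : ℝ => ξ₂ + t • d) d t := by
  simpa using ((hasDerivAt_id t).smul_const d).const_add ξ₂

lemma comp_line_first {E : Type*} [NormedAddCommGroup E] [NormedSpace ℝ E]
    {F : E → ℝ} (hF : ContDiff ℝ 2 F) (ξ₂ d : E) (t : ℝ) :
    HasDerivAt (fun t : ℝ => F (ξ₂ + t • d)) (fderiv ℝ F (ξ₂ + t • d) d) t :=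
  ((hF.differentiable (by norm_num) (ξ₂ + t • d)).hasFDerivAt).comp_hasDerivAt t
    (line_hasDerivAt ξ₂ d t)

lemma comp_line_second {E : Type*} [NormedAddCommGroup E] [NormedSpace ℝ E]
    {F : E → ℝ} (hF : ContDiff ℝ 2 F) (ξ₂ d : E) (t : ℝ) :
    HasDerivAt (fun t : ℝ => fderiv ℝ F (ξ₂ + t • d) d)
      (fderiv ℝ (fun η => fderiv ℝ F η d) (ξ₂ + t • d) d) t := by
  have h1 : ContDiff ℝ 1 (fderiv ℝ F) := hF.fderiv_right (by norm_num)
  have h2 : Differentiable ℝ (fderiv ℝ F) := h1.differentiable (by norm_num)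
  have h3 : Differentiable ℝ (fun η => fderiv ℝ F η d) := by
    have := (ContinuousLinearMap.apply ℝ ℝ d).differentiable.comp h2
    exact this
  exact ((h3 (ξ₂ + t • d)).hasFDerivAt).comp_hasDerivAt t (line_hasDerivAt ξ₂ d t)

end Helpers

/-- Strict convexity estimate via the `V`-function: if `ξ ↦ f(x,u,ξ)` is `C²` with
`ν(s+|ξ|)^(p-2)|λ|² ≤ ⟨∂²f(x,u,ξ)λ,λ⟩ ≤ L(s+|ξ|)^(p-2)|λ|²`, then
`(1/c)|V_s(ξ₁)-V_s(ξ₂)|² ≤ f(x,u,ξ₁)-f(x,u,ξ₂)-⟨∂f(x,u,ξ₂),ξ₁-ξ₂⟩` with `c = c(n,p,ν,L)`. -/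
theorem taylor_convexity_V (n : ℕ) (p s ν L : ℝ)
    (hp : 1 < p) (hs : s ∈ Set.Icc (0:ℝ) 1) (hν : 0 < ν) (hν1 : ν ≤ 1) (hL : 1 ≤ L) :
    ∃ c : ℝ, 0 < c ∧
      ∀ (Ω : Set (EuclideanSpace ℝ (Fin n)))
        (f : EuclideanSpace ℝ (Fin n) → ℝ → EuclideanSpace ℝ (Fin n) → ℝ),
        (∀ x ∈ Ω, ∀ u : ℝ, ContDiff ℝ 2 (f x u)) →
        (∀ x ∈ Ω, ∀ (u : ℝ) (ξ lam : EuclideanSpace ℝ (Fin n)),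
          ν * (s + ‖ξ‖) ^ (p - 2) * ‖lam‖ ^ (2:ℕ) ≤
              fderiv ℝ (fun η => fderiv ℝ (f x u) η lam) ξ lam ∧
            fderiv ℝ (fun η => fderiv ℝ (f x u) η lam) ξ lam ≤
              L * (s + ‖ξ‖) ^ (p - 2) * ‖lam‖ ^ (2:ℕ)) →
        ∀ x ∈ Ω, ∀ (u : ℝ) (ξ₁ ξ₂ : EuclideanSpace ℝ (Fin n)),
          (1/c) * ‖(s + ‖ξ₁‖) ^ ((p - 2)/2) • ξ₁ - (s + ‖ξ₂‖) ^ ((p - 2)/2) • ξ₂‖ ^ (2:ℕ) ≤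
            f x u ξ₁ - f x u ξ₂ - fderiv ℝ (f x u) ξ₂ (ξ₁ - ξ₂) := by
  set α : ℝ := (p - 2) / 2 with hαdef
  set C : ℝ := 8 + 4 ^ |α| * (1 + 4 * |α|) with hCdef
  set m : ℝ := min ((4:ℝ) ^ (-(p - 2))) (2 ^ (p - 2)) with hmdef
  have h4 : (1:ℝ) ≤ 4 ^ |α| := Real.one_le_rpow (by norm_num) (abs_nonneg α)
  have hCpos : 0 < C := by
    have : (0:ℝ) ≤ 4 ^ |α| * (1 + 4 * |α|) := by positivity
    rw [hCdef]; linarith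
  have hmpos : 0 < m := lt_min (Real.rpow_pos_of_pos (by norm_num) _)
    (Real.rpow_pos_of_pos (by norm_num) _)
  refine ⟨64 * C ^ 2 / (ν * m), by positivity, ?_⟩
  set c : ℝ := 64 * C ^ 2 / (ν * m) with hcdef
  have hcpos : 0 < c := by positivity
  have hkey : (1/c) * C ^ 2 = ν * m / 64 := by
    rw [hcdef]; field_simp
  intro Ω f hcd hsd x hx u ξ₁ ξ₂
  by_cases heq : ξ₁ = ξ₂
  · subst heq
    simp [sub_self]
  have hF : ContDiff ℝ 2 (f x u) := hcd x hx u
  set d : EuclideanSpace ℝ (Fin n) := ξ₁ - ξ₂ with hddef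
  have hdne : d ≠ 0 := sub_ne_zero.mpr heq
  have hdpos : 0 < ‖d‖ := norm_pos_iff.mpr hdne
  have hdle : ‖d‖ ≤ ‖ξ₁‖ + ‖ξ₂‖ := by rw [hddef]; exact norm_sub_le ξ₁ ξ₂
  set M : ℝ := s + ‖ξ₁‖ + ‖ξ₂‖ with hMdef
  have hM : 0 < M := by rw [hMdef]; have := hs.1; linarith
  -- the one-dimensional sections
  set g : ℝ → ℝ := fun t => f x u (ξ₂ + t • d) with hgdef
  set g₁ : ℝ → ℝ := fun t => fderiv ℝ (f x u) (ξ₂ + t • d) d with hg₁def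
  set g₂ : ℝ → ℝ := fun t => fderiv ℝ (fun η => fderiv ℝ (f x u) η d) (ξ₂ + t • d) d with hg₂def
  have hg : ∀ t, HasDerivAt g (g₁ t) t := fun t => comp_line_first hF ξ₂ d t
  have hg₁ : ∀ t, HasDerivAt g₁ (g₂ t) t := fun t => comp_line_second hF ξ₂ d t
  have hlow : ∀ t : ℝ, ν * (s + ‖ξ₂ + t • d‖) ^ (p - 2) * ‖d‖ ^ (2:ℕ) ≤ g₂ t :=
    fun t => (hsd x hx u (ξ₂ + t • d) d).1
  have h0 : ∀ t, 0 ≤ g₂ t := by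
    intro t
    refine le_trans ?_ (hlow t)
    have : (0:ℝ) ≤ s + ‖ξ₂ + t • d‖ := by have := hs.1; positivity
    positivity
  -- choose a good subinterval
  obtain ⟨a, b, ha, hab, hb, hfac, hseg⟩ : ∃ a b : ℝ, 0 ≤ a ∧ a < b ∧ b < 1 ∧
      (1/64 : ℝ) ≤ (1 - b) * (b - a) ∧
      ∀ t ∈ Set.Ioo a b, M/4 ≤ s + ‖ξ₂ + t • d‖ ∧ s + ‖ξ₂ + t • d‖ ≤ 2 * M := by
    have hs0 := hs.1
    rcases le_total ‖ξ₁‖ ‖ξ₂‖ with hcmp | hcmp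
    · refine ⟨0, 1/4, le_rfl, by norm_num, by norm_num, by norm_num, ?_⟩
      intro t ht
      have htd : ‖t • d‖ ≤ (1/4) * ‖d‖ := by
        rw [norm_smul, Real.norm_eq_abs, abs_of_nonneg ht.1.le]
        exact mul_le_mul_of_nonneg_right ht.2.le (norm_nonneg d)
      have htri1 : ‖ξ₂‖ ≤ ‖ξ₂ + t • d‖ + ‖t • d‖ := by
        calc ‖ξ₂‖ = ‖(ξ₂ + t • d) - t • d‖ := by rw [add_sub_cancel_right]
          _ ≤ ‖ξ₂ + t • d‖ + ‖t • d‖ := norm_sub_le _ _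
      have htri2 : ‖ξ₂ + t • d‖ ≤ ‖ξ₂‖ + ‖t • d‖ := norm_add_le _ _
      have hd2 : ‖d‖ ≤ 2 * ‖ξ₂‖ := by linarith
      constructor
      · rw [hMdef]; linarith
      · rw [hMdef]; linarith [norm_nonneg ξ₁, norm_nonneg ξ₂]
    · refine ⟨3/4, 7/8, by norm_num, by norm_num, by norm_num, by norm_num, ?_⟩
      intro t ht
      have hrw : ξ₂ + t • d = ξ₁ - (1 - t) • d := by
        rw [hddef]; module
      have htd : ‖(1 - t) • d‖ ≤ (1/4) * ‖d‖ := by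
        rw [norm_smul, Real.norm_eq_abs, abs_of_nonneg (by linarith [ht.2] : (0:ℝ) ≤ 1 - t)]
        have : (1:ℝ) - t ≤ 1/4 := by linarith [ht.1]
        exact mul_le_mul_of_nonneg_right this (norm_nonneg d)
      have htri1 : ‖ξ₁‖ ≤ ‖ξ₁ - (1 - t) • d‖ + ‖(1 - t) • d‖ := by
        calc ‖ξ₁‖ = ‖(ξ₁ - (1 - t) • d) + (1 - t) • d‖ := by rw [sub_add_cancel]
          _ ≤ ‖ξ₁ - (1 - t) • d‖ + ‖(1 - t) • d‖ := norm_add_le _ _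
      have htri2 : ‖ξ₁ - (1 - t) • d‖ ≤ ‖ξ₁‖ + ‖(1 - t) • d‖ := norm_sub_le _ _
      have hd2 : ‖d‖ ≤ 2 * ‖ξ₁‖ := by linarith
      rw [hrw]
      constructor
      · rw [hMdef]; linarith
      · rw [hMdef]; linarith [norm_nonneg ξ₁, norm_nonneg ξ₂]
  obtain ⟨τ, hτ, hineq⟩ := taylor_lower_bound hg hg₁ h0 ha hab hb
  obtain ⟨hτl, hτu⟩ := hseg τ hτ
  -- lower bound on the remainder
  have hrpow : m * M ^ (p - 2) ≤ (s + ‖ξ₂ + τ • d‖) ^ (p - 2) := by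
    rw [hmdef]
    exact rpow_lower_of_mem hM hτl hτu
  have hstep1 : (1/64 : ℝ) * (ν * m * M ^ (p - 2) * ‖d‖ ^ (2:ℕ)) ≤ g 1 - g 0 - g₁ 0 := by
    have e1 : ν * m * M ^ (p - 2) * ‖d‖ ^ (2:ℕ) ≤ ν * (s + ‖ξ₂ + τ • d‖) ^ (p - 2) * ‖d‖ ^ (2:ℕ) := by
      calc ν * m * M ^ (p - 2) * ‖d‖ ^ (2:ℕ)
          = (m * M ^ (p - 2)) * (ν * ‖d‖ ^ (2:ℕ)) := by ring
        _ ≤ ((s + ‖ξ₂ + τ • d‖) ^ (p - 2)) * (ν * ‖d‖ ^ (2:ℕ)) :=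
            mul_le_mul_of_nonneg_right hrpow (by positivity)
        _ = ν * (s + ‖ξ₂ + τ • d‖) ^ (p - 2) * ‖d‖ ^ (2:ℕ) := by ring
    have e2 : ν * m * M ^ (p - 2) * ‖d‖ ^ (2:ℕ) ≤ g₂ τ := e1.trans (hlow τ)
    calc (1/64 : ℝ) * (ν * m * M ^ (p - 2) * ‖d‖ ^ (2:ℕ))
        ≤ (1/64 : ℝ) * g₂ τ := by
          apply mul_le_mul_of_nonneg_left e2 (by norm_num)
      _ ≤ (1 - b) * (b - a) * g₂ τ := mul_le_mul_of_nonneg_right hfac (h0 τ)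
      _ ≤ g 1 - g 0 - g₁ 0 := hineq
  -- rewrite g-values
  have eg1 : g 1 = f x u ξ₁ := by
    rw [hgdef]
    simp only [one_smul, hddef, add_sub_cancel]
  have eg0 : g 0 = f x u ξ₂ := by
    rw [hgdef]; simp
  have eg₁0 : g₁ 0 = fderiv ℝ (f x u) ξ₂ d := by
    rw [hg₁def]; simp
  -- upper bound for the V-difference
  have hα1 : (0:ℝ) ≤ α + 1 := by rw [hαdef]; linarith
  have hV : ‖(s + ‖ξ₁‖) ^ α • ξ₁ - (s + ‖ξ₂‖) ^ α • ξ₂‖ ≤ C * M ^ α * ‖d‖ := by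
    have := V_diff_le (s := s) (α := α) hs.1 hα1 ξ₁ ξ₂ (by rw [hMdef] at hM; exact hM)
    rw [← hddef, ← hMdef, ← hCdef] at this
    exact this
  have hVsq : ‖(s + ‖ξ₁‖) ^ α • ξ₁ - (s + ‖ξ₂‖) ^ α • ξ₂‖ ^ (2:ℕ) ≤
      C ^ 2 * M ^ (p - 2) * ‖d‖ ^ (2:ℕ) := by
    have hsq := pow_le_pow_left₀ (norm_nonneg _) hV 2
    have eM : (M ^ α) ^ (2:ℕ) = M ^ (p - 2) := by
      rw [← Real.rpow_natCast (M ^ α) 2, ← Real.rpow_mul hM.le]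
      norm_num
      rw [hαdef]
      ring_nf
    calc ‖(s + ‖ξ₁‖) ^ α • ξ₁ - (s + ‖ξ₂‖) ^ α • ξ₂‖ ^ (2:ℕ)
        ≤ (C * M ^ α * ‖d‖) ^ (2:ℕ) := hsq
      _ = C ^ 2 * (M ^ α) ^ (2:ℕ) * ‖d‖ ^ (2:ℕ) := by ring
      _ = C ^ 2 * M ^ (p - 2) * ‖d‖ ^ (2:ℕ) := by rw [eM]
  -- put it together
  rw [← eg1, ← eg0, ← eg₁0]
  calc (1/c) * ‖(s + ‖ξ₁‖) ^ α • ξ₁ - (s + ‖ξ₂‖) ^ α • ξ₂‖ ^ (2:ℕ)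
      ≤ (1/c) * (C ^ 2 * M ^ (p - 2) * ‖d‖ ^ (2:ℕ)) := by
        apply mul_le_mul_of_nonneg_left hVsq (by positivity)
    _ = (1/64 : ℝ) * (ν * m * M ^ (p - 2) * ‖d‖ ^ (2:ℕ)) := by
        rw [show (1/c) * (C ^ 2 * M ^ (p - 2) * ‖d‖ ^ (2:ℕ))
            = ((1/c) * C ^ 2) * (M ^ (p - 2) * ‖d‖ ^ (2:ℕ)) from by ring, hkey]
        ring
    _ ≤ g 1 - g 0 - g₁ 0 := hstep1
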